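/- arXiv:1510.04201 — 2 statements merged into one kernel-verified Lean document; each statement's English description precedes it below -/
import Mathlib

section
/- If u ∈ Φ^{1,p}_0(Ω) with 1 < p < N, then |∇u|^{p−1} ∈ L^q(Ω) for every q < N/(N−1) and |u|^{p−1} ∈ L^r(Ω) for every r < N/(N−p). -/
open MeasureTheory Filter Topology Set
open ENNReal NNReal

noncomputable section

/-- The truncation at level `k`. -/
def Tk (k s : ℝ) : ℝ := if |s| ≤ k then s else k * s / |s|

/-- `φ_p'(s) = ((1+s²)(log(e+s²))⁴)^{-1/(2p)}`. -/
def phip' (p s : ℝ) : ℝ :=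
  ((1 + s ^ 2) * (Real.log (Real.exp 1 + s ^ 2)) ^ 4) ^ (-(1 / (2 * p)))

/-- `φ_p(s) = ∫₀ˢ φ_p'` -/
def phip (p s : ℝ) : ℝ := ∫ t in (0:ℝ)..s, phip' p t

variable {N : ℕ}

/-- Membership in `W^{1,p}_0(Ω)` with weak gradient `gu`: `u` and `gu` are `p`-integrable
on `Ω` and `u` is approximable, together with its gradient, in `L^p` by smooth functions
with compact support contained in `Ω`. -/
def MemW1p0 (p : ℝ) (Ω : Set (EuclideanSpace ℝ (Fin N)))
    (u : EuclideanSpace ℝ (Fin N) → ℝ)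
    (gu : EuclideanSpace ℝ (Fin N) → EuclideanSpace ℝ (Fin N)) : Prop :=
  MemLp u (ENNReal.ofReal p) (volume.restrict Ω) ∧
  MemLp gu (ENNReal.ofReal p) (volume.restrict Ω) ∧
  ∀ ε > 0, ∃ φ : EuclideanSpace ℝ (Fin N) → ℝ,
    ContDiff ℝ (⊤ : ℕ∞) φ ∧ HasCompactSupport φ ∧ tsupport φ ⊆ Ω ∧
    (∫ x in Ω, |u x - φ x| ^ p) < ε ∧ (∫ x in Ω, ‖gu x - gradient φ x‖ ^ p) < ε

/-- Membership in `T^{1,p}_0(Ω)` with generalized gradient `gu`: every truncation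
`T_k(u)` belongs to `W^{1,p}_0(Ω)`, with `∇[T_k(u)] = χ_{{|u|<k}} gu`. -/
def MemT1p0 (p : ℝ) (Ω : Set (EuclideanSpace ℝ (Fin N)))
    (u : EuclideanSpace ℝ (Fin N) → ℝ)
    (gu : EuclideanSpace ℝ (Fin N) → EuclideanSpace ℝ (Fin N)) : Prop :=
  ∀ k : ℝ, 0 < k →
    MemW1p0 p Ω (fun x => Tk k (u x)) (fun x => if |u x| < k then gu x else 0)

/-- Membership in `Φ^{1,p}_0(Ω)` with generalized gradient `gu`:
`φ_p(u) ∈ W^{1,p}_0(Ω)` with `∇[φ_p(u)] = φ_p'(u) gu`. -/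
def MemPhi1p0 (p : ℝ) (Ω : Set (EuclideanSpace ℝ (Fin N)))
    (u : EuclideanSpace ℝ (Fin N) → ℝ)
    (gu : EuclideanSpace ℝ (Fin N) → EuclideanSpace ℝ (Fin N)) : Prop :=
  MemT1p0 p Ω u gu ∧
  MemW1p0 p Ω (fun x => phip p (u x)) (fun x => phip' p (u x) • gu x)



/-! ### Auxiliary lemmas -/

/-- auxiliary base function -/
def Bf (s : ℝ) : ℝ := (1 + s ^ 2) * (Real.log (Real.exp 1 + s ^ 2)) ^ 4

lemma one_le_logE (s : ℝ) : 1 ≤ Real.log (Real.exp 1 + s ^ 2) := by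
  rw [Real.le_log_iff_exp_le (by positivity)]
  nlinarith [sq_nonneg s]

lemma one_le_Bf (s : ℝ) : 1 ≤ Bf s := by
  have h : (1:ℝ) ≤ (Real.log (Real.exp 1 + s ^ 2)) ^ 4 := one_le_pow₀ (one_le_logE s)
  unfold Bf; nlinarith [sq_nonneg s]

lemma Bf_pos (s : ℝ) : 0 < Bf s := lt_of_lt_of_le one_pos (one_le_Bf s)

lemma sq_le_Bf (s : ℝ) : s ^ 2 ≤ Bf s := by
  have h : (1:ℝ) ≤ (Real.log (Real.exp 1 + s ^ 2)) ^ 4 := one_le_pow₀ (one_le_logE s)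
  unfold Bf; nlinarith [sq_nonneg s]

lemma phip'_eq (p s : ℝ) : phip' p s = Bf s ^ (-(1 / (2 * p))) := rfl

lemma phip'_pos (p s : ℝ) : 0 < phip' p s := Real.rpow_pos_of_pos (Bf_pos s) _

lemma phip'_even (p s : ℝ) : phip' p (-s) = phip' p s := by simp [phip']

lemma Bf_even (s : ℝ) : Bf (-s) = Bf s := by simp [Bf]

lemma Bf_mono {a b : ℝ} (ha : 0 ≤ a) (hab : a ≤ b) : Bf a ≤ Bf b := by
  have h1 : a ^ 2 ≤ b ^ 2 := by nlinarith
  have h2 : Real.log (Real.exp 1 + a ^ 2) ≤ Real.log (Real.exp 1 + b ^ 2) :=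
    Real.log_le_log (by positivity) (by linarith)
  have h0 : 0 ≤ Real.log (Real.exp 1 + a ^ 2) := le_trans zero_le_one (one_le_logE a)
  exact mul_le_mul (by linarith) (pow_le_pow_left₀ h0 h2 4) (by positivity) (by nlinarith)

lemma phip'_anti (p : ℝ) (hp : 0 < p) {a b : ℝ} (ha : 0 ≤ a) (hab : a ≤ b) :
    phip' p b ≤ phip' p a := by
  rw [phip'_eq, phip'_eq]
  have h2p : (0:ℝ) < 1 / (2 * p) := by positivity
  exact Real.rpow_le_rpow_of_nonpos (Bf_pos a) (Bf_mono ha hab) (by linarith)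

lemma Bf_continuous : Continuous Bf := by
  apply Continuous.mul
  · continuity
  · exact ((Real.continuousOn_log.comp_continuous (by continuity)
      (fun x => ne_of_gt (by positivity))).pow 4)

lemma phip'_continuous (p : ℝ) : Continuous (phip' p) :=
  Bf_continuous.rpow_const (fun x => Or.inl (Bf_pos x).ne')

lemma phip_nonneg (p : ℝ) {s : ℝ} (hs : 0 ≤ s) : 0 ≤ phip p s :=
  intervalIntegral.integral_nonneg hs (fun t _ => (phip'_pos p t).le)

lemma phip_lower (p : ℝ) (hp : 0 < p) {s : ℝ} (hs : 0 ≤ s) :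
    s * phip' p s ≤ phip p s := by
  have h1 : (∫ t in (0:ℝ)..s, phip' p s) ≤ ∫ t in (0:ℝ)..s, phip' p t := by
    apply intervalIntegral.integral_mono_on hs
      (intervalIntegrable_const)
      ((phip'_continuous p).intervalIntegrable _ _)
    intro t ht
    exact phip'_anti p hp ht.1 ht.2
  simpa [mul_comm, phip] using h1

lemma phip_neg (p s : ℝ) : phip p (-s) = - phip p s := by
  have h1 : phip p (-s) = ∫ t in (0:ℝ)..(-s), phip' p (-t) := by
    simp only [phip, phip'_even]
  rw [h1, intervalIntegral.integral_comp_neg (fun t => phip' p t)]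
  simp only [neg_zero]
  rw [intervalIntegral.integral_symm, neg_neg]
  rfl

lemma abs_phip (p : ℝ) (s : ℝ) : |phip p s| = phip p |s| := by
  rcases le_or_gt 0 s with h | h
  · rw [abs_of_nonneg h, abs_of_nonneg (phip_nonneg p h)]
  · rw [abs_of_neg h, phip_neg]
    have h2 := phip_neg p (-s)
    rw [neg_neg] at h2
    have h3 : 0 ≤ phip p (-s) := phip_nonneg p (by linarith)
    rw [abs_of_nonpos (by linarith)]

lemma Bf_eventually_le {κ : ℝ} (hκ : 2 < κ) : ∃ M : ℝ, 1 ≤ M ∧ ∀ s, M ≤ s → Bf s ≤ s ^ κ := by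
  set ε := (κ - 2) / 16 with hε
  have hε0 : 0 < ε := by rw [hε]; linarith
  set C₀ : ℝ := (Real.exp 1 + 1) ^ (1 + 4 * ε) / ε ^ 4 with hC₀
  have hC₀0 : 0 < C₀ := by
    apply div_pos (Real.rpow_pos_of_pos (by positivity) _) (by positivity)
  -- eventually s ^ (8ε) ≥ C₀
  have h8 : Tendsto (fun s : ℝ => s ^ (8 * ε)) atTop atTop :=
    tendsto_rpow_atTop (by linarith : (0:ℝ) < 8 * ε)
  obtain ⟨M₀, hM₀⟩ := (h8.eventually_ge_atTop C₀).exists_forall_of_atTop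
  refine ⟨max 1 M₀, le_max_left _ _, fun s hs => ?_⟩
  have hs1 : (1:ℝ) ≤ s := le_trans (le_max_left _ _) hs
  have hs0 : (0:ℝ) < s := by linarith
  have hsM₀ : M₀ ≤ s := le_trans (le_max_right _ _) hs
  -- step 1 : log bound
  have hlog : Real.log (Real.exp 1 + s ^ 2) ≤ (Real.exp 1 + s ^ 2) ^ ε / ε :=
    Real.log_le_rpow_div (by positivity) hε0
  have hlognn : 0 ≤ Real.log (Real.exp 1 + s ^ 2) :=
    le_trans zero_le_one (one_le_logE s)
  have hbase : Real.exp 1 + s ^ 2 ≤ (Real.exp 1 + 1) * s ^ 2 := by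
    have h1 : (1:ℝ) ≤ s ^ 2 := by nlinarith
    nlinarith [Real.exp_pos 1]
  have h1s : (1:ℝ) + s ^ 2 ≤ Real.exp 1 + s ^ 2 := by
    nlinarith [Real.exp_one_gt_d9]
  -- B s ≤ (e+s²)^{1+4ε}/ε⁴
  have hB1 : Bf s ≤ (Real.exp 1 + s ^ 2) ^ (1 + 4 * ε) / ε ^ 4 := by
    have h4 : (Real.log (Real.exp 1 + s ^ 2)) ^ 4 ≤ ((Real.exp 1 + s ^ 2) ^ ε / ε) ^ 4 :=
      pow_le_pow_left₀ hlognn hlog 4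
    have h5 : ((Real.exp 1 + s ^ 2) ^ ε / ε) ^ 4
        = (Real.exp 1 + s ^ 2) ^ (4 * ε) / ε ^ 4 := by
      rw [div_pow, ← Real.rpow_natCast ((Real.exp 1 + s ^ 2) ^ ε) 4, ← Real.rpow_mul (by positivity)]
      norm_num [mul_comm]
    have h6 : (Real.exp 1 + s ^ 2) ^ (1 + 4 * ε)
        = (Real.exp 1 + s ^ 2) * (Real.exp 1 + s ^ 2) ^ (4 * ε) := by
      rw [Real.rpow_add (by positivity), Real.rpow_one]
    rw [h6]
    calc Bf s = (1 + s ^ 2) * (Real.log (Real.exp 1 + s ^ 2)) ^ 4 := rfl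
      _ ≤ (Real.exp 1 + s ^ 2) * ((Real.exp 1 + s ^ 2) ^ (4*ε) / ε ^ 4) := by
          rw [← h5] at *
          apply mul_le_mul h1s h4 (by positivity) (by positivity)
      _ = (Real.exp 1 + s ^ 2) * (Real.exp 1 + s ^ 2) ^ (4*ε) / ε ^ 4 := by ring
  -- (e+s²)^{1+4ε} ≤ (e+1)^{1+4ε} s^{2+8ε}
  have hB2 : (Real.exp 1 + s ^ 2) ^ (1 + 4 * ε)
      ≤ (Real.exp 1 + 1) ^ (1 + 4 * ε) * s ^ (2 + 8 * ε) := by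
    have := Real.rpow_le_rpow (by positivity) hbase (by positivity : (0:ℝ) ≤ 1 + 4 * ε)
    refine le_trans this (le_of_eq ?_)
    rw [Real.mul_rpow (by positivity) (by positivity)]
    congr 1
    rw [← Real.rpow_natCast s 2, ← Real.rpow_mul hs0.le]
    norm_num
    ring_nf
  -- combine
  have hB3 : Bf s ≤ C₀ * s ^ (2 + 8 * ε) := by
    rw [hC₀]
    calc Bf s ≤ (Real.exp 1 + s ^ 2) ^ (1 + 4 * ε) / ε ^ 4 := hB1
      _ ≤ ((Real.exp 1 + 1) ^ (1 + 4 * ε) * s ^ (2 + 8 * ε)) / ε ^ 4 := by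
          gcongr
      _ = (Real.exp 1 + 1) ^ (1 + 4 * ε) / ε ^ 4 * s ^ (2 + 8 * ε) := by ring
  have hfin : C₀ * s ^ (2 + 8 * ε) ≤ s ^ κ := by
    have hCs : C₀ ≤ s ^ (8 * ε) := hM₀ s hsM₀
    have : s ^ κ = s ^ (8 * ε) * s ^ (2 + 8 * ε) := by
      rw [← Real.rpow_add hs0]
      congr 1
      rw [hε]; ring
    rw [this]
    exact mul_le_mul_of_nonneg_right hCs (by positivity)
  linarith

lemma Bf_abs (s : ℝ) : Bf |s| = Bf s := by
  rcases abs_choice s with h | h <;> rw [h]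
  exact Bf_even s

lemma keyP (p pstar m : ℝ) (hp : 0 < p) (hps : 0 < pstar) (hm : 0 ≤ m)
    (hlt : m + pstar / p < pstar) :
    ∃ C : ℝ, 1 ≤ C ∧ ∀ s : ℝ, Bf s ^ (m / 2) ≤ C * (1 + |phip p s| ^ pstar) := by
  have ha : 0 < m / 2 + pstar / (2 * p) := by positivity
  set a : ℝ := m / 2 + pstar / (2 * p) with ha_def
  have hκ : 2 < pstar / a := by
    rw [lt_div_iff₀ ha, ha_def]
    have : pstar / p = 2 * (pstar / (2 * p)) := by ring
    linarith
  obtain ⟨M, hM1, hM⟩ := Bf_eventually_le hκ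
  refine ⟨max 1 (Bf M ^ (m / 2)), le_max_left _ _, fun s => ?_⟩
  have hC1 : (1:ℝ) ≤ max 1 (Bf M ^ (m / 2)) := le_max_left _ _
  have hxnn : (0:ℝ) ≤ |phip p s| ^ pstar := Real.rpow_nonneg (abs_nonneg _) _
  have hBs : Bf s ^ (m/2) = Bf |s| ^ (m/2) := by rw [Bf_abs]
  rcases le_or_gt (|s|) M with hsM | hsM
  · -- small s
    rw [hBs]
    calc Bf |s| ^ (m/2) ≤ Bf M ^ (m/2) :=
          Real.rpow_le_rpow (Bf_pos _).le (Bf_mono (abs_nonneg s) hsM) (by positivity)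
      _ ≤ max 1 (Bf M ^ (m / 2)) := le_max_right _ _
      _ ≤ max 1 (Bf M ^ (m / 2)) * (1 + |phip p s| ^ pstar) := by
          apply le_mul_of_one_le_right (by linarith)
          linarith
  · -- large s
    set t := |s| with ht_def
    have ht0 : 0 < t := lt_of_lt_of_le (by linarith) hsM.le
    have h1 : Bf t ^ a ≤ t ^ pstar := by
      calc Bf t ^ a ≤ (t ^ (pstar / a)) ^ a :=
            Real.rpow_le_rpow (Bf_pos _).le (hM t hsM.le) ha.le
        _ = t ^ pstar := by
            rw [← Real.rpow_mul ht0.le]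
            congr 1
            field_simp
    have h2 : Bf t ^ (m / 2) = Bf t ^ a * Bf t ^ (-(pstar / (2 * p))) := by
      rw [← Real.rpow_add (Bf_pos t)]
      congr 1
      rw [ha_def]; ring
    have h3 : Bf t ^ (m / 2) ≤ t ^ pstar * Bf t ^ (-(pstar / (2 * p))) := by
      rw [h2]
      exact mul_le_mul_of_nonneg_right h1 (Real.rpow_nonneg (Bf_pos t).le _)
    have h4 : t ^ pstar * Bf t ^ (-(pstar / (2 * p))) = (t * phip' p t) ^ pstar := by
      rw [Real.mul_rpow ht0.le (phip'_pos p t).le]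
      congr 1
      rw [phip'_eq, ← Real.rpow_mul (Bf_pos t).le]
      congr 1
      ring
    have h5 : (t * phip' p t) ^ pstar ≤ phip p t ^ pstar :=
      Real.rpow_le_rpow (mul_nonneg ht0.le (phip'_pos p t).le) (phip_lower p hp ht0.le) hps.le
    have h6 : phip p t = |phip p s| := by rw [abs_phip]
    calc Bf s ^ (m/2) = Bf t ^ (m/2) := hBs
      _ ≤ (t * phip' p t) ^ pstar := by rw [← h4]; exact h3
      _ ≤ phip p t ^ pstar := h5
      _ = |phip p s| ^ pstar := by rw [h6]
      _ ≤ 1 * (1 + |phip p s| ^ pstar) := by linarith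
      _ ≤ max 1 (Bf M ^ (m / 2)) * (1 + |phip p s| ^ pstar) := by
          apply mul_le_mul_of_nonneg_right hC1 (by linarith)

lemma memℒp_of_pow_le {X : Type*} [MeasurableSpace X] {μ : Measure X} {f h : X → ℝ} {t : ℝ}
    (ht : 0 < t) (hf : AEStronglyMeasurable f μ) (hfnn : ∀ x, 0 ≤ f x)
    (hh : Integrable h μ) (hbound : ∀ x, f x ^ t ≤ h x) :
    MemLp f (ENNReal.ofReal t) μ := by
  refine ⟨hf, ?_⟩
  rw [eLpNorm_eq_lintegral_rpow_enorm_toReal (by simp [ht, ht.le]) ENNReal.ofReal_ne_top]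
  rw [ENNReal.toReal_ofReal ht.le]
  have hkey : ∫⁻ x, ‖f x‖ₑ ^ t ∂μ < ∞ := by
    have hle : ∀ x, ‖f x‖ₑ ^ t ≤ ‖h x‖ₑ := by
      intro x
      rw [Real.enorm_eq_ofReal (hfnn x), ENNReal.ofReal_rpow_of_nonneg (hfnn x) ht.le]
      exact le_trans (ENNReal.ofReal_le_ofReal (hbound x)) (Real.ofReal_le_enorm _)
    exact lt_of_le_of_lt (lintegral_mono hle) hh.2
  exact ENNReal.rpow_lt_top_of_nonneg (by positivity) hkey.ne


lemma eLpNorm_le_of_integral_pow_lt {X : Type*} [MeasurableSpace X] {μ : Measure X}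
    {F : Type*} [NormedAddCommGroup F] {f : X → F} {p ε : ℝ} (hp : 0 < p) (hε : 0 < ε)
    (hf : MemLp f (ENNReal.ofReal p) μ) (h : (∫ x, ‖f x‖ ^ p ∂μ) < ε) :
    eLpNorm f (ENNReal.ofReal p) μ ≤ ENNReal.ofReal (ε ^ (1/p)) := by
  rw [eLpNorm_eq_lintegral_rpow_enorm_toReal (by simp [hp, hp.le]) ENNReal.ofReal_ne_top,
    ENNReal.toReal_ofReal hp.le]
  have hInt : Integrable (fun x => ‖f x‖ ^ p) μ := by
    have := hf.integrable_norm_rpow (by simp [hp, hp.le]) ENNReal.ofReal_ne_top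
    rwa [ENNReal.toReal_ofReal hp.le] at this
  have h1 : ∫⁻ x, ‖f x‖ₑ ^ p ∂μ = ENNReal.ofReal (∫ x, ‖f x‖ ^ p ∂μ) := by
    rw [ofReal_integral_eq_lintegral_ofReal hInt (ae_of_all _ fun x => by positivity)]
    apply lintegral_congr
    intro x
    rw [← ofReal_norm, ENNReal.ofReal_rpow_of_nonneg (norm_nonneg _) hp.le]
  rw [h1]
  have h2 : (0:ℝ) ≤ ∫ x, ‖f x‖ ^ p ∂μ := integral_nonneg (fun x => by positivity)
  rw [ENNReal.ofReal_rpow_of_nonneg h2 (by positivity)]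
  exact ENNReal.ofReal_le_ofReal (Real.rpow_le_rpow h2 h.le (by positivity))

lemma sobolev {N : ℕ} (hN : 2 ≤ N) {p : ℝ} (hp : 1 < p) (hpN : p < N)
    {Ω : Set (EuclideanSpace ℝ (Fin N))} (hΩo : IsOpen Ω) (hΩb : Bornology.IsBounded Ω)
    {v : EuclideanSpace ℝ (Fin N) → ℝ} {gv : EuclideanSpace ℝ (Fin N) → EuclideanSpace ℝ (Fin N)}
    (hv : MemW1p0 p Ω v gv) :
    MemLp v (ENNReal.ofReal (N * p / (N - p))) (volume.restrict Ω) := by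
  have hp0 : (0:ℝ) < p := by linarith
  have hN0 : (0:ℝ) < N := by positivity
  have hNp : (0:ℝ) < N - p := by linarith
  set pstar : ℝ := N * p / (N - p) with hpstar_def
  have hpstar0 : 0 < pstar := by positivity
  set μΩ := volume.restrict Ω with hμΩ
  haveI : IsFiniteMeasure μΩ := by
    constructor
    rw [hμΩ, Measure.restrict_apply_univ]
    exact hΩb.measure_lt_top
  obtain ⟨hv1, hv2, happ⟩ := hv
  have h := fun n : ℕ => happ (1/(n+1:ℝ)) (by positivity)
  choose φ hsm hcs hsupp hI1 hI2 using h
  -- basic facts about φ n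
  have hφaesm : ∀ n, AEStronglyMeasurable (φ n) μΩ := fun n => (hsm n).continuous.aestronglyMeasurable
  have hφb : ∀ n, MemLp (φ n) (ENNReal.ofReal p) μΩ := by
    intro n
    obtain ⟨C, hC⟩ := (hcs n).exists_bound_of_continuous (hsm n).continuous
    exact MemLp.of_bound (hφaesm n) C (ae_of_all _ hC)
  -- L^p bounds from approximations
  have hεb : ∀ n : ℕ, (0:ℝ) < 1/(n+1:ℝ) := fun n => by positivity
  have hvφ : ∀ n, eLpNorm (fun x => v x - φ n x) (ENNReal.ofReal p) μΩ
      ≤ ENNReal.ofReal ((1/(n+1:ℝ)) ^ (1/p)) := by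
    intro n
    apply eLpNorm_le_of_integral_pow_lt hp0 (hεb n) (hv1.sub (hφb n))
    have := hI1 n
    calc (∫ x, ‖v x - φ n x‖ ^ p ∂μΩ) = ∫ x in Ω, |v x - φ n x| ^ p := by
          simp_rw [Real.norm_eq_abs]
          rfl
      _ < 1/(n+1:ℝ) := this
  have hd : ∀ n, ContDiff ℝ 1 (φ n) := fun n => (hsm n).of_le (by exact_mod_cast le_top)
  have hgrad_cont : ∀ n, Continuous (gradient (φ n)) := by
    intro n
    have hc : Continuous (fderiv ℝ (φ n)) := (hd n).continuous_fderiv one_ne_zero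
    exact ((InnerProductSpace.toDual ℝ _).symm.continuous).comp hc
  have hgsupp : ∀ n, Function.support (gradient (φ n)) ⊆ tsupport (φ n) := by
    intro n x hx
    apply support_fderiv_subset ℝ
    simp only [Function.mem_support] at hx ⊢
    intro hf
    apply hx
    show (InnerProductSpace.toDual ℝ _).symm (fderiv ℝ (φ n) x) = 0
    rw [hf, map_zero]
  have hgφ : ∀ n, eLpNorm (fun x => gv x - gradient (φ n) x) (ENNReal.ofReal p) μΩ
      ≤ ENNReal.ofReal ((1/(n+1:ℝ)) ^ (1/p)) := by
    intro n
    have hgradcs : HasCompactSupport (gradient (φ n)) :=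
      HasCompactSupport.mono' (hcs n) (hgsupp n)
    have hgradb : MemLp (gradient (φ n)) (ENNReal.ofReal p) μΩ := by
      obtain ⟨C, hC⟩ := hgradcs.exists_bound_of_continuous (hgrad_cont n)
      exact MemLp.of_bound (hgrad_cont n).aestronglyMeasurable C (ae_of_all _ hC)
    apply eLpNorm_le_of_integral_pow_lt hp0 (hεb n) (hv2.sub hgradb)
    exact hI2 n
  -- coercion facts
  have hofp : ENNReal.ofReal p = ((p.toNNReal : ℝ≥0) : ℝ≥0∞) := rfl
  have hofps : ENNReal.ofReal pstar = ((pstar.toNNReal : ℝ≥0) : ℝ≥0∞) := rfl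
  have hfinrank : 0 < Module.finrank ℝ (EuclideanSpace ℝ (Fin N)) := by
    rw [finrank_euclideanSpace_fin]; omega
  have hp1 : (1:ℝ≥0) ≤ p.toNNReal := by
    rw [← Real.toNNReal_one]
    exact Real.toNNReal_mono hp.le
  have hNne : (N:ℝ) ≠ 0 := by positivity
  have hp' : ((pstar.toNNReal : ℝ≥0):ℝ)⁻¹ = ((p.toNNReal : ℝ≥0):ℝ)⁻¹
      - ((Module.finrank ℝ (EuclideanSpace ℝ (Fin N)) : ℝ))⁻¹ := by
    rw [Real.coe_toNNReal _ hp0.le, Real.coe_toNNReal _ hpstar0.le, finrank_euclideanSpace_fin,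
      hpstar_def]
    field_simp
  -- GNS inequality
  set C : ℝ≥0 := SNormLESNormFDerivOfEqConst ℝ (volume : Measure (EuclideanSpace ℝ (Fin N))) (p.toNNReal : ℝ) with hC_def
  have hGNS : ∀ n, eLpNorm (φ n) (pstar.toNNReal : ℝ≥0∞) volume
      ≤ C * eLpNorm (fderiv ℝ (φ n)) (p.toNNReal : ℝ≥0∞) volume := fun n =>
    eLpNorm_le_eLpNorm_fderiv_of_eq volume (hd n) (hcs n) hp1 hfinrank hp'
  -- pass from fderiv to gradient and restrict
  have hfd_eq : ∀ n, eLpNorm (fderiv ℝ (φ n)) (p.toNNReal : ℝ≥0∞) volume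
      = eLpNorm (gradient (φ n)) (p.toNNReal : ℝ≥0∞) μΩ := by
    intro n
    have h1 : eLpNorm (fderiv ℝ (φ n)) (p.toNNReal : ℝ≥0∞) volume
        = eLpNorm (gradient (φ n)) (p.toNNReal : ℝ≥0∞) volume := by
      rw [← eLpNorm_norm (fderiv ℝ (φ n)), ← eLpNorm_norm (gradient (φ n))]
      apply eLpNorm_congr_ae
      apply ae_of_all
      intro x
      show ‖fderiv ℝ (φ n) x‖ = ‖(InnerProductSpace.toDual ℝ _).symm (fderiv ℝ (φ n) x)‖
      rw [LinearIsometryEquiv.norm_map]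
    rw [h1, hμΩ, ← eLpNorm_indicator_eq_eLpNorm_restrict hΩo.measurableSet,
      indicator_eq_self.2 (subset_trans (hgsupp n) (hsupp n))]
  -- uniform bound
  set K : ℝ≥0∞ := eLpNorm gv (ENNReal.ofReal p) μΩ + 1 with hK_def
  have hKlt : K < ⊤ := by
    rw [hK_def]
    exact ENNReal.add_lt_top.mpr ⟨hv2.eLpNorm_lt_top, ENNReal.one_lt_top⟩
  have h1p : (1:ℝ≥0∞) ≤ ENNReal.ofReal p := ENNReal.one_le_ofReal.mpr hp.le
  have hone : ∀ n : ℕ, ENNReal.ofReal ((1/(n+1:ℝ)) ^ (1/p)) ≤ 1 := by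
    intro n
    rw [ENNReal.ofReal_le_one]
    apply Real.rpow_le_one (by positivity) _ (by positivity)
    rw [div_le_one (by positivity)]
    linarith [Nat.cast_nonneg (α := ℝ) n]
  have hgbd : ∀ n, eLpNorm (gradient (φ n)) (ENNReal.ofReal p) μΩ ≤ K := by
    intro n
    have heq : gradient (φ n) = gv - (gv - gradient (φ n)) := by
      funext x; simp
    calc eLpNorm (gradient (φ n)) (ENNReal.ofReal p) μΩ
        = eLpNorm (gv - (gv - gradient (φ n))) (ENNReal.ofReal p) μΩ := by rw [← heq]
      _ ≤ eLpNorm gv (ENNReal.ofReal p) μΩ + eLpNorm (gv - gradient (φ n)) (ENNReal.ofReal p) μΩ :=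
          eLpNorm_sub_le hv2.1 (hv2.1.sub (hgrad_cont n).aestronglyMeasurable) h1p
      _ ≤ eLpNorm gv (ENNReal.ofReal p) μΩ + ENNReal.ofReal ((1/(n+1:ℝ)) ^ (1/p)) :=
          add_le_add le_rfl (hgφ n)
      _ ≤ K := by rw [hK_def]; exact add_le_add le_rfl (hone n)
  -- convergence in measure and a.e. subsequence
  have hb0 : Tendsto (fun n : ℕ => ENNReal.ofReal ((1/(n+1:ℝ)) ^ (1/p))) atTop (𝓝 0) := by
    have t1 : Tendsto (fun n:ℕ => 1/((n:ℝ)+1)) atTop (𝓝 0) :=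
      tendsto_one_div_add_atTop_nhds_zero_nat
    have t2 : Tendsto (fun x:ℝ => x ^ (1/p)) (𝓝 0) (𝓝 0) := by
      have := (Real.continuousAt_rpow_const 0 (1/p) (Or.inr (by positivity))).tendsto
      rwa [Real.zero_rpow (by positivity)] at this
    have t3 := (ENNReal.continuous_ofReal.tendsto 0).comp (t2.comp t1)
    simpa [Function.comp_def] using t3
  have htend0 : Tendsto (fun n => eLpNorm (φ n - v) (ENNReal.ofReal p) μΩ) atTop (𝓝 0) := by
    apply tendsto_of_tendsto_of_tendsto_of_le_of_le tendsto_const_nhds hb0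
      (fun n => zero_le)
    intro n
    show eLpNorm (φ n - v) (ENNReal.ofReal p) μΩ ≤ _
    rw [eLpNorm_sub_comm]
    exact hvφ n
  have hpne : ENNReal.ofReal p ≠ 0 := by
    simp only [ne_eq, ENNReal.ofReal_eq_zero, not_le]
    linarith
  have hconv : TendstoInMeasure μΩ φ atTop v :=
    tendstoInMeasure_of_tendsto_eLpNorm hpne hφaesm hv1.1 htend0
  obtain ⟨ns, hns, hae⟩ := hconv.exists_seq_tendsto_ae
  -- Fatou
  have hlim := MeasureTheory.Lp.eLpNorm_lim_le_liminf_eLpNorm (μ := μΩ) (p := ENNReal.ofReal pstar)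
    (fun i => hφaesm (ns i)) v hae
  have hterm : ∀ i, eLpNorm (φ (ns i)) (ENNReal.ofReal pstar) μΩ ≤ C * K := by
    intro i
    calc eLpNorm (φ (ns i)) (ENNReal.ofReal pstar) μΩ
        ≤ eLpNorm (φ (ns i)) (ENNReal.ofReal pstar) volume :=
          eLpNorm_mono_measure _ Measure.restrict_le_self
      _ ≤ C * eLpNorm (fderiv ℝ (φ (ns i))) (p.toNNReal : ℝ≥0∞) volume := by
          rw [hofps]; exact hGNS (ns i)
      _ = C * eLpNorm (gradient (φ (ns i))) (p.toNNReal : ℝ≥0∞) μΩ := by rw [hfd_eq]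
      _ ≤ C * K := by
          apply mul_le_mul_right
          rw [← hofp]
          exact hgbd (ns i)
  have hfinal : eLpNorm v (ENNReal.ofReal pstar) μΩ ≤ C * K :=
    le_trans hlim (liminf_le_of_frequently_le' (Frequently.of_forall hterm))
  exact ⟨hv1.1, lt_of_le_of_lt hfinal (ENNReal.mul_lt_top ENNReal.coe_lt_top hKlt)⟩

theorem phi_summability (p : ℝ) (hp : 1 < p)
    {N : ℕ} (hN : 2 ≤ N) (hpN : p < N)
    (Ω : Set (EuclideanSpace ℝ (Fin N))) (hΩo : IsOpen Ω) (hΩb : Bornology.IsBounded Ω)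
    (u : EuclideanSpace ℝ (Fin N) → ℝ)
    (g : EuclideanSpace ℝ (Fin N) → EuclideanSpace ℝ (Fin N))
    (hu : MemPhi1p0 p Ω u g) :
    (∀ q : ℝ, 0 < q → q < N / (N - 1) →
      MemLp (fun x => ‖g x‖ ^ (p - 1)) (ENNReal.ofReal q) (volume.restrict Ω)) ∧
    (∀ r : ℝ, 0 < r → r < N / (N - p) →
      MemLp (fun x => |u x| ^ (p - 1)) (ENNReal.ofReal r) (volume.restrict Ω)) := by
  obtain ⟨hT, hW⟩ := hu
  have hp0 : (0:ℝ) < p := by linarith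
  have hp1 : (0:ℝ) < p - 1 := by linarith
  have hN0 : (0:ℝ) < N := by positivity
  have hN2 : (2:ℝ) ≤ N := by exact_mod_cast hN
  have hN1' : (0:ℝ) < (N:ℝ) - 1 := by linarith
  have hNp : (0:ℝ) < (N:ℝ) - p := by linarith
  set μΩ := volume.restrict Ω with hμΩ
  set pstar : ℝ := N * p / (N - p) with hpstar_def
  have hpstar0 : 0 < pstar := by positivity
  haveI : IsFiniteMeasure μΩ := by
    constructor
    rw [hμΩ, Measure.restrict_apply_univ]
    exact hΩb.measure_lt_top
  -- measurability of u and g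
  have hu_aesm : AEStronglyMeasurable u μΩ := by
    apply aestronglyMeasurable_of_tendsto_ae atTop
      (fun n : ℕ => ((hT ((n:ℝ)+1) (by positivity)).1).1)
    filter_upwards with x
    apply Tendsto.congr' _ tendsto_const_nhds
    filter_upwards [eventually_ge_atTop (⌈|u x|⌉₊)] with n hn
    have h1 : (⌈|u x|⌉₊:ℝ) ≤ n := Nat.cast_le.mpr hn
    have h2 := Nat.le_ceil (|u x|)
    have h3 : |u x| ≤ (n:ℝ) + 1 := by linarith
    simp [Tk, h3]
  have hg_aesm : AEStronglyMeasurable g μΩ := by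
    apply aestronglyMeasurable_of_tendsto_ae atTop
      (fun n : ℕ => ((hT ((n:ℝ)+1) (by positivity)).2.1).1)
    filter_upwards with x
    apply Tendsto.congr' _ tendsto_const_nhds
    filter_upwards [eventually_ge_atTop (⌈|u x|⌉₊)] with n hn
    have h1 : (⌈|u x|⌉₊:ℝ) ≤ n := Nat.cast_le.mpr hn
    have h2 := Nat.le_ceil (|u x|)
    have h3 : |u x| < (n:ℝ) + 1 := by linarith
    simp [h3]
  -- Sobolev for v = phip ∘ u
  have hvstar : MemLp (fun x => phip p (u x)) (ENNReal.ofReal pstar) μΩ :=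
    sobolev hN hp hpN hΩo hΩb hW
  have hvInt : Integrable (fun x => |phip p (u x)| ^ pstar) μΩ := by
    have := hvstar.integrable_norm_rpow (by simp [hpstar0, hpstar0.le]) ENNReal.ofReal_ne_top
    rw [ENNReal.toReal_ofReal hpstar0.le] at this
    simpa [Real.norm_eq_abs] using this
  have hhInt : ∀ C : ℝ, Integrable (fun x => C * (1 + |phip p (u x)| ^ pstar)) μΩ :=
    fun C => (((integrable_const 1).add hvInt).const_mul C)
  have hA : pstar / p = (N:ℝ) / (N - p) := by
    rw [hpstar_def]; field_simp
  constructor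
  · -- gradient part
    intro q hq0 hqN
    -- arithmetic facts
    have hq1 : q * ((N:ℝ) - 1) < N := by
      rwa [lt_div_iff₀ hN1'] at hqN
    have hden : 0 < p - (p - 1) * q := by
      nlinarith [mul_lt_mul_of_pos_left hq1 hp0, mul_pos hq0 hNp]
    set t : ℝ := p * q / (p - (p - 1) * q) with ht_def
    have ht0 : 0 < t := by positivity
    have ht_lt : t < pstar := by
      rw [ht_def, hpstar_def, div_lt_div_iff₀ hden hNp]
      nlinarith [mul_lt_mul_of_pos_left hq1 (mul_pos hp0 hp0)]
    set m : ℝ := (p - 1) * t / p with hm_def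
    have hm0 : 0 ≤ m := by positivity
    have hm_lt : m + pstar / p < pstar := by
      have h1 : (p-1) * t < (p-1) * pstar := by nlinarith
      show (p-1) * t / p + pstar / p < pstar
      rw [← add_div, div_lt_iff₀ hp0]
      nlinarith
    obtain ⟨C, hC1, hC⟩ := keyP p pstar m hp0 hpstar0 hm0 hm_lt
    -- the weight w
    set w : EuclideanSpace ℝ (Fin N) → ℝ := fun x => phip' p (u x) ^ (-(p-1)) with hw_def
    have hw_cont : Continuous (fun s : ℝ => phip' p s ^ (-(p-1))) :=
      (phip'_continuous p).rpow_const (fun s => Or.inl (phip'_pos p s).ne')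
    have hw_pow : ∀ s : ℝ, (phip' p s ^ (-(p-1))) ^ t = Bf s ^ (m/2) := by
      intro s
      rw [phip'_eq, ← Real.rpow_mul (Bf_pos s).le, ← Real.rpow_mul (Bf_pos s).le]
      congr 1
      rw [hm_def, ht_def]
      field_simp
    have hw_mem : MemLp w (ENNReal.ofReal t) μΩ := by
      apply memℒp_of_pow_le ht0
        (hw_cont.comp_aestronglyMeasurable hu_aesm)
        (fun x => (Real.rpow_pos_of_pos (phip'_pos p (u x)) _).le)
        (hhInt C)
      intro x
      show (phip' p (u x) ^ (-(p-1))) ^ t ≤ _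
      rw [hw_pow (u x)]
      exact hC (u x)
    -- the |gv|^{p-1} part
    have hgv : MemLp (fun x => phip' p (u x) • g x) (ENNReal.ofReal p) μΩ := hW.2.1
    have hgva : MemLp (fun x => ‖phip' p (u x) • g x‖ ^ (p-1))
        (ENNReal.ofReal (p / (p-1))) μΩ := by
      have := hgv.norm_rpow_div (ENNReal.ofReal (p-1))
      rw [ENNReal.toReal_ofReal hp1.le] at this
      rwa [ENNReal.ofReal_div_of_pos hp1, ← hμΩ] at *
    -- Hölder
    have harith : 1 / (ENNReal.ofReal q) = 1 / (ENNReal.ofReal t) + 1 / (ENNReal.ofReal (p/(p-1))) := by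
      rw [one_div, one_div, one_div, ← ENNReal.ofReal_inv_of_pos hq0,
        ← ENNReal.ofReal_inv_of_pos ht0, ← ENNReal.ofReal_inv_of_pos (by positivity),
        ← ENNReal.ofReal_add (by positivity) (by positivity)]
      congr 1
      rw [ht_def]
      field_simp
      ring
    have hprod : MemLp (w • (fun x => ‖phip' p (u x) • g x‖ ^ (p-1))) (ENNReal.ofReal q) μΩ :=
      MemLp.smul (hpqr := ⟨by simpa only [one_div] using harith.symm⟩) hgva hw_mem
    apply hprod.ae_eq
    apply ae_of_all
    intro x
    have hnorm : ‖phip' p (u x) • g x‖ = phip' p (u x) * ‖g x‖ := by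
      rw [norm_smul, Real.norm_eq_abs, abs_of_pos (phip'_pos p (u x))]
    have hpos := phip'_pos p (u x)
    show phip' p (u x) ^ (-(p-1)) * ‖phip' p (u x) • g x‖ ^ (p-1) = ‖g x‖ ^ (p-1)
    rw [hnorm, Real.mul_rpow hpos.le (norm_nonneg _)]
    rw [Real.rpow_neg hpos.le]
    rw [← mul_assoc, inv_mul_cancel₀ (Real.rpow_pos_of_pos hpos _).ne']
    ring
  · -- u part
    intro r hr0 hrN
    set m : ℝ := (p - 1) * r with hm_def
    have hm0 : 0 ≤ m := by positivity
    have hr1 : r * ((N:ℝ) - p) < N := by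
      rwa [lt_div_iff₀ hNp] at hrN
    have hm_lt : m + pstar / p < pstar := by
      have key : (p-1)*r + (N:ℝ)/(N-p) < N*p/(N-p) := by
        have hstep : (p-1)*r*((N:ℝ)-p) + N < N*p := by
          nlinarith [mul_lt_mul_of_pos_left hr1 hp1]
        rw [add_div' _ _ _ hNp.ne', div_lt_div_iff₀ hNp hNp]
        nlinarith [mul_lt_mul_of_pos_right hstep hNp]
      rw [hA]
      exact key
    obtain ⟨C, hC1, hC⟩ := keyP p pstar m hp0 hpstar0 hm0 hm_lt
    have hcont : Continuous (fun s : ℝ => |s| ^ (p-1)) :=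
      continuous_abs.rpow_const (fun s => Or.inr hp1.le)
    apply memℒp_of_pow_le hr0
      (hcont.comp_aestronglyMeasurable hu_aesm)
      (fun x => Real.rpow_nonneg (abs_nonneg _) _)
      (hhInt C)
    intro x
    have h1 : (|u x| ^ (p-1)) ^ r = |u x| ^ m := by
      rw [← Real.rpow_mul (abs_nonneg _), hm_def]
    have h2 : |u x| ^ m ≤ Bf (u x) ^ (m/2) := by
      have ha : ((u x)^2) ^ (m/2) = |u x| ^ m := by
        rw [← sq_abs, ← Real.rpow_natCast |u x| 2, ← Real.rpow_mul (abs_nonneg _)]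
        congr 1
        push_cast
        ring
      rw [← ha]
      exact Real.rpow_le_rpow (sq_nonneg _) (sq_le_Bf _) (by positivity)
    rw [h1]
    exact le_trans h2 (hC (u x))
end
end

section
/- Let X be a reflexive Banach space, U ⊆ X a bounded open set, F : closure(U) → X' continuous of class (S)_+, and w ∈ X' with w ∉ F(∂U). Then the set {u ∈ closure(U) : F(u) = w} is compact (possibly empty). -/
open Filter Topology

section aux
open NormedSpace TopologicalSpace
variable {E : Type*} [NormedAddCommGroup E] [NormedSpace ℝ E]

lemma aux_sep (Y : Submodule ℝ E) (hY : IsClosed (Y : Set E)) {x : E} (hx : x ∉ Y) :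
    ∃ f : StrongDual ℝ E, (∀ y ∈ Y, f y = 0) ∧ f x ≠ 0 := by
  obtain ⟨f, u, hfu, hux⟩ := geometric_hahn_banach_closed_point Y.convex hY hx
  have hf0 : ∀ y ∈ Y, f y = 0 := by
    intro y hy
    by_contra h
    have := hfu (((u + 1) / f y) • y) (Y.smul_mem _ hy)
    rw [map_smul, smul_eq_mul, div_mul_cancel₀ _ h] at this
    linarith
  have h0 : (0 : ℝ) < u := by simpa using hfu 0 Y.zero_mem
  exact ⟨f, hf0, fun h => by rw [h] at hux; linarith⟩

lemma aux_dual_sep [SeparableSpace (StrongDual ℝ E)] : SeparableSpace E := by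
  have : Nonempty (StrongDual ℝ E) := ⟨0⟩
  set g : ℕ → StrongDual ℝ E := denseSeq (StrongDual ℝ E)
  have hg : DenseRange g := denseRange_denseSeq _
  have hx : ∀ n, ∃ x : E, ‖x‖ ≤ 1 ∧ ‖g n‖ ≤ 2 * ‖g n x‖ := by
    intro n
    rcases eq_or_ne (g n) 0 with h | h
    · exact ⟨0, by simp, by simp [h]⟩
    · have hpos : ‖g n‖ / 2 < ‖g n‖ := by
        have : 0 < ‖g n‖ := norm_pos_iff.mpr h
        linarith
      obtain ⟨x, hx1, hx2⟩ := (g n).exists_lt_apply_of_lt_opNorm hpos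
      exact ⟨x, hx1.le, by linarith⟩
  choose x hx1 hx2 using hx
  have htop : (Submodule.span ℝ (Set.range x)).topologicalClosure = ⊤ := by
    by_contra h
    obtain ⟨z, hz⟩ : ∃ z : E, z ∉ (Submodule.span ℝ (Set.range x)).topologicalClosure := by
      by_contra hz
      push_neg at hz
      exact h (Submodule.eq_top_iff'.mpr hz)
    obtain ⟨f, hf0, hfz⟩ := aux_sep _ (Submodule.isClosed_topologicalClosure _) hz
    have hfne : f ≠ 0 := fun h => hfz (by simp [h])
    set f' : StrongDual ℝ E := ‖f‖⁻¹ • f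
    have hf'norm : ‖f'‖ = 1 := by
      simp [f', norm_smul, inv_mul_cancel₀ (norm_ne_zero_iff.mpr hfne)]
    have hf'0 : ∀ n, f' (x n) = 0 := by
      intro n
      have : f (x n) = 0 := hf0 _ (Submodule.le_topologicalClosure _
        (Submodule.subset_span (Set.mem_range_self n)))
      simp [f', this]
    obtain ⟨n, hn⟩ := hg.exists_dist_lt f' (by norm_num : (0:ℝ) < 1/4)
    rw [dist_eq_norm] at hn
    have hnorm : (3:ℝ)/4 ≤ ‖g n‖ := by
      have h := norm_sub_norm_le f' (g n)
      rw [hf'norm] at h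
      linarith
    have happly : ‖g n (x n)‖ ≤ 1/4 := by
      have : g n (x n) = (g n - f') (x n) := by simp [hf'0 n]
      rw [this]
      calc ‖(g n - f') (x n)‖ ≤ ‖g n - f'‖ * ‖x n‖ := (g n - f').le_opNorm _
        _ ≤ ‖g n - f'‖ * 1 := by
            exact mul_le_mul_of_nonneg_left (hx1 n) (norm_nonneg _)
        _ ≤ 1/4 := by rw [mul_one, norm_sub_rev]; linarith
    have := hx2 n
    linarith
  have hsep : IsSeparable (Set.univ : Set E) := by
    have h1 : IsSeparable (Submodule.span ℝ (Set.range x) : Set E) :=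
      ((Set.countable_range x).isSeparable).span
    have h2 := h1.closure
    rw [← Submodule.topologicalClosure_coe, htop] at h2
    simpa using h2
  exact (isSeparable_univ_iff).mp hsep

end aux

section refl
open NormedSpace TopologicalSpace
variable {X : Type*} [NormedAddCommGroup X] [NormedSpace ℝ X]

/-- restriction of functionals to a submodule, as a continuous linear map -/
noncomputable def auxRestrict (Y : Submodule ℝ X) : StrongDual ℝ X →L[ℝ] StrongDual ℝ ↥Y :=
  (ContinuousLinearMap.compL ℝ ↥Y X ℝ).flip Y.subtypeL

@[simp] lemma auxRestrict_apply (Y : Submodule ℝ X) (f : StrongDual ℝ X) (y : ↥Y) :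
    auxRestrict Y f y = f y := rfl

/-- A closed subspace of a reflexive space is reflexive. -/
lemma aux_subspace_reflexive
    (hrefl : Function.Surjective (inclusionInDoubleDual ℝ X))
    (Y : Submodule ℝ X) (hY : IsClosed (Y : Set X)) :
    Function.Surjective (inclusionInDoubleDual ℝ ↥Y) := by
  intro ψ
  set Φ : StrongDual ℝ (StrongDual ℝ X) := ψ.comp (auxRestrict Y)
  obtain ⟨v, hv⟩ := hrefl Φ
  have hv' : ∀ f : StrongDual ℝ X, f v = ψ (auxRestrict Y f) := by
    intro f
    have := congrFun (congrArg DFunLike.coe hv) f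
    simpa using this.symm ▸ rfl
  have hvY : v ∈ Y := by
    by_contra hvn
    obtain ⟨f, hf0, hfv⟩ := aux_sep Y hY hvn
    have : auxRestrict Y f = 0 := by
      ext y
      exact hf0 y y.2
    have h2 := hv' f
    rw [this] at h2
    simp at h2
    exact hfv h2
  refine ⟨⟨v, hvY⟩, ?_⟩
  ext g
  obtain ⟨f, hf, -⟩ := exists_extension_norm_eq Y g
  have h1 : auxRestrict Y f = g := by
    ext y
    simp [hf y]
  calc (inclusionInDoubleDual ℝ ↥Y ⟨v, hvY⟩) g = g ⟨v, hvY⟩ := rfl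
    _ = f v := (hf ⟨v, hvY⟩).symm
    _ = ψ (auxRestrict Y f) := hv' f
    _ = ψ g := by rw [h1]

/-- Bounded sequences in a reflexive space have weakly convergent subsequences. -/
lemma aux_weak_subseq [CompleteSpace X]
    (hrefl : Function.Surjective (inclusionInDoubleDual ℝ X))
    (u : ℕ → X) (M : ℝ) (hM : ∀ n, ‖u n‖ ≤ M) :
    ∃ (φ : ℕ → ℕ) (v : X), StrictMono φ ∧
      ∀ f : StrongDual ℝ X, Tendsto (fun j => f (u (φ j))) atTop (𝓝 (f v)) := by
  have hM0 : 0 ≤ M := le_trans (norm_nonneg _) (hM 0)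
  set Y : Submodule ℝ X := (Submodule.span ℝ (Set.range u)).topologicalClosure with hYdef
  have hYc : IsClosed (Y : Set X) := Submodule.isClosed_topologicalClosure _
  have hu : ∀ n, u n ∈ Y := fun n => Submodule.le_topologicalClosure _
    (Submodule.subset_span (Set.mem_range_self n))
  haveI : CompleteSpace ↥Y := hYc.completeSpace_coe
  haveI hsepY : SeparableSpace ↥Y := by
    have h1 : IsSeparable (Submodule.span ℝ (Set.range u) : Set X) :=
      ((Set.countable_range u).isSeparable).span
    have h2 := h1.closure
    rw [← Submodule.topologicalClosure_coe] at h2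
    exact h2.separableSpace
  have hYrefl := aux_subspace_reflexive hrefl Y hYc
  haveI : SeparableSpace (StrongDual ℝ (StrongDual ℝ ↥Y)) :=
    (hYrefl.denseRange).separableSpace (inclusionInDoubleDual ℝ ↥Y).continuous
  haveI : SeparableSpace (StrongDual ℝ ↥Y) := aux_dual_sep (E := StrongDual ℝ ↥Y)
  haveI : Nonempty (StrongDual ℝ ↥Y) := ⟨0⟩
  set fk : ℕ → StrongDual ℝ ↥Y := denseSeq (StrongDual ℝ ↥Y)
  have hfk : DenseRange fk := denseRange_denseSeq _
  set uY : ℕ → ↥Y := fun n => ⟨u n, hu n⟩ with huYdef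
  have huYnorm : ∀ n, ‖uY n‖ ≤ M := fun n => hM n
  -- sequential compactness in the product of intervals
  set K : Set (ℕ → ℝ) := Set.univ.pi fun k => Metric.closedBall (0 : ℝ) (‖fk k‖ * M)
  have hKcomp : IsCompact K := isCompact_univ_pi fun k => isCompact_closedBall _ _
  set T : ℕ → (ℕ → ℝ) := fun n k => fk k (uY n)
  have hTK : ∀ n, T n ∈ K := by
    intro n k _
    simp only [Metric.mem_closedBall, dist_zero_right]
    calc ‖fk k (uY n)‖ ≤ ‖fk k‖ * ‖uY n‖ := (fk k).le_opNorm _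
      _ ≤ ‖fk k‖ * M := mul_le_mul_of_nonneg_left (huYnorm n) (norm_nonneg (fk k))
  obtain ⟨g, -, φ, hφ, hTconv⟩ := hKcomp.isSeqCompact.subseq_of_frequently_in
    (Frequently.of_forall hTK)
  have hconv : ∀ k, Tendsto (fun j => fk k (uY (φ j))) atTop (𝓝 (g k)) := by
    intro k
    exact (tendsto_pi_nhds.mp hTconv) k
  -- every functional converges along the subsequence
  have hcauchy : ∀ f : StrongDual ℝ X, CauchySeq fun j => f (u (φ j)) := by
    intro f
    set g0 : StrongDual ℝ ↥Y := auxRestrict Y f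
    rw [Metric.cauchySeq_iff]
    intro ε hε
    have hδ : (0:ℝ) < ε / (4 * (M + 1)) := by positivity
    obtain ⟨k, hk⟩ := hfk.exists_dist_lt g0 hδ
    obtain ⟨N, hN⟩ := Metric.cauchySeq_iff.mp (hconv k).cauchySeq (ε/2) (by positivity)
    refine ⟨N, fun i hi j hj => ?_⟩
    have key : ∀ m, dist (f (u (φ m))) (fk k (uY (φ m))) ≤ ε / 4 := by
      intro m
      have h1 : f (u (φ m)) = g0 (uY (φ m)) := rfl
      rw [h1, dist_eq_norm, ← ContinuousLinearMap.sub_apply]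
      calc ‖(g0 - fk k) (uY (φ m))‖ ≤ ‖g0 - fk k‖ * ‖uY (φ m)‖ := (g0 - fk k).le_opNorm _
        _ ≤ ‖g0 - fk k‖ * M :=
            mul_le_mul_of_nonneg_left (huYnorm _) (norm_nonneg (g0 - fk k))
        _ ≤ (ε / (4 * (M + 1))) * M := by
            apply mul_le_mul_of_nonneg_right _ hM0
            exact (lt_of_eq_of_lt (dist_eq_norm g0 (fk k)).symm hk).le
        _ ≤ ε / 4 := by
            rw [div_mul_eq_mul_div, div_le_div_iff₀ (by positivity) (by norm_num)]
            ring_nf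
            nlinarith
    calc dist (f (u (φ i))) (f (u (φ j)))
        ≤ dist (f (u (φ i))) (fk k (uY (φ i))) + dist (fk k (uY (φ i))) (fk k (uY (φ j)))
          + dist (fk k (uY (φ j))) (f (u (φ j))) := dist_triangle4 _ _ _ _
      _ < ε/4 + ε/2 + ε/4 := by
          have := hN i hi j hj
          have h1 := key i
          have h2 := key j
          rw [dist_comm] at h2
          have h3 : dist (fk k (uY (φ i))) (fk k (uY (φ j))) < ε/2 := hN i hi j hj
          linarith [lt_of_le_of_lt (le_refl (dist (f (u (φ i))) (fk k (uY (φ i))))) (lt_of_le_of_lt h1 (by linarith : ε/4 < ε/4 + 1))]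
      _ = ε := by ring
  have hlim : ∀ f : StrongDual ℝ X, ∃ L : ℝ, Tendsto (fun j => f (u (φ j))) atTop (𝓝 L) :=
    fun f => cauchySeq_tendsto_of_complete (hcauchy f)
  choose L hL using hlim
  -- L is a bounded linear functional on the dual
  have hLadd : ∀ f h : StrongDual ℝ X, L (f + h) = L f + L h := by
    intro f h
    refine tendsto_nhds_unique (hL (f + h)) ?_
    have := (hL f).add (hL h)
    simpa using this
  have hLsmul : ∀ (c : ℝ) (f : StrongDual ℝ X), L (c • f) = c * L f := by
    intro c f
    refine tendsto_nhds_unique (hL (c • f)) ?_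
    have := (hL f).const_mul c
    simpa using this
  have hLbound : ∀ f : StrongDual ℝ X, ‖L f‖ ≤ M * ‖f‖ := by
    intro f
    have h1 : Tendsto (fun j => ‖f (u (φ j))‖) atTop (𝓝 ‖L f‖) := (hL f).norm
    refine le_of_tendsto' h1 fun j => ?_
    calc ‖f (u (φ j))‖ ≤ ‖f‖ * ‖u (φ j)‖ := f.le_opNorm _
      _ ≤ ‖f‖ * M := mul_le_mul_of_nonneg_left (hM _) (norm_nonneg _)
      _ = M * ‖f‖ := mul_comm _ _
  set Φ : StrongDual ℝ (StrongDual ℝ X) := LinearMap.mkContinuous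
    { toFun := L, map_add' := hLadd, map_smul' := by intro c f; simpa using hLsmul c f } M
    (fun f => hLbound f)
  obtain ⟨v, hv⟩ := hrefl Φ
  refine ⟨φ, v, hφ, fun f => ?_⟩
  have : f v = L f := by
    have := congrFun (congrArg DFunLike.coe hv) f
    simpa [Φ] using this
  rw [this]
  exact hL f

end refl


/-- A map `F : D → X'` is of class `(S)_+` if for every sequence `(u_n)` in `D`
weakly converging to some `u` with `limsup ⟨F(u_n), u_n − u⟩ ≤ 0`,
one has `‖u_n − u‖ → 0`. -/
def IsSPlusOn {X : Type*} [NormedAddCommGroup X] [NormedSpace ℝ X]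
    (F : X → StrongDual ℝ X) (D : Set X) : Prop :=
  ∀ (u : ℕ → X) (v : X), (∀ n, u n ∈ D) →
    (∀ f : StrongDual ℝ X, Tendsto (fun n => f (u n)) atTop (nhds (f v))) →
    Filter.limsup (fun n => (F (u n)) (u n - v)) atTop ≤ 0 →
    Tendsto u atTop (nhds v)

theorem solution_set_compact {X : Type*} [NormedAddCommGroup X] [NormedSpace ℝ X]
    [CompleteSpace X]
    -- `X` is reflexive
    (hrefl : Function.Surjective (NormedSpace.inclusionInDoubleDual ℝ X))
    (U : Set X) (hUo : IsOpen U) (hUb : Bornology.IsBounded U)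
    (F : X → StrongDual ℝ X)
    (hFc : ContinuousOn F (closure U)) (hFS : IsSPlusOn F (closure U))
    (w : StrongDual ℝ X) (hw : ∀ u ∈ frontier U, F u ≠ w) :
    IsCompact {u ∈ closure U | F u = w} := by
  apply IsSeqCompact.isCompact
  intro u hu
  have humem : ∀ n, u n ∈ closure U := fun n => (hu n).1
  have huF : ∀ n, F (u n) = w := fun n => (hu n).2
  obtain ⟨M, hM⟩ := (hUb.closure).exists_norm_le
  obtain ⟨φ, v, hφ, hweak⟩ := aux_weak_subseq hrefl u M fun n => hM _ (humem n)
  have hlimsup : Filter.limsup (fun j => (F ((u ∘ φ) j)) ((u ∘ φ) j - v)) atTop ≤ 0 := by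
    have heq : (fun j => (F ((u ∘ φ) j)) ((u ∘ φ) j - v)) = fun j => w (u (φ j)) - w v := by
      funext j
      simp [Function.comp, huF (φ j), map_sub]
    rw [heq]
    have h1 : Tendsto (fun j => w (u (φ j)) - w v) atTop (𝓝 (w v - w v)) :=
      (hweak w).sub_const _
    rw [sub_self] at h1
    exact h1.limsup_eq.le
  have hnorm : Tendsto (u ∘ φ) atTop (𝓝 v) :=
    hFS (u ∘ φ) v (fun j => humem (φ j)) (fun f => hweak f) hlimsup
  have hvmem : v ∈ closure U :=
    isClosed_closure.mem_of_tendsto hnorm (Eventually.of_forall fun j => humem (φ j))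
  have hFv : F v = w := by
    have hT : Tendsto (u ∘ φ) atTop (𝓝[closure U] v) :=
      tendsto_nhdsWithin_of_tendsto_nhds_of_eventually_within _ hnorm
        (Eventually.of_forall fun j => humem (φ j))
    have h2 : Tendsto (fun j => F ((u ∘ φ) j)) atTop (𝓝 (F v)) := (hFc v hvmem).tendsto.comp hT
    have h3 : Tendsto (fun j => F ((u ∘ φ) j)) atTop (𝓝 w) := by
      simp only [Function.comp, huF]
      exact tendsto_const_nhds
    exact (tendsto_nhds_unique h2 h3)
  exact ⟨v, ⟨hvmem, hFv⟩, φ, hφ, hnorm⟩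
end
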